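/- The Hadamard gradient flow is a mirror descent flow with time-varying hyperbolic entropy: let λ ≥ 0, F : ℝ^n → ℝ differentiable, and let u, v : [0,∞) → ℝ^n solve the coupled ODEs u̇(t) = −λu(t) − v(t)·∇F(u(t)·v(t)) and v̇(t) = −λv(t) − u(t)·∇F(u(t)·v(t)) (all products coordinatewise). Set x(t) := u(t)·v(t) and γ(t) := ½|u(0)² − v(0)²| e^{−2λt} (coordinatewise). Then with η_c(s) := s·arcsinh(s/c) − √(s²+c²) + c applied coordinatewise (so ∇η_c(x) = arcsinh(x/c) coordinatewise), one has d/dt ∇η_{γ(t)}(x(t)) = −2∇F(x(t)) for all t. -/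

import Mathlib

/-- The continuous linear functional `w ↦ ⟨grad, w⟩` on `ℝ^n`. -/
noncomputable def vecCLM {n : ℕ} (grad : Fin n → ℝ) : (Fin n → ℝ) →L[ℝ] ℝ :=
  LinearMap.toContinuousLinearMap (∑ i, grad i • LinearMap.proj i)

/-- The Hadamard gradient flow is a mirror descent flow with a
time-varying hyperbolic entropy.  Let `λ ≥ 0`, `F` differentiable with gradient
`DF`, and let `u, v` solve (coordinatewise)
`u̇ = −λu − v·∇F(u·v)`, `v̇ = −λv − u·∇F(u·v)`.
With `x(t) = u(t)·v(t)`, `γ(t)_i = ½|u(0)_i² − v(0)_i²| e^{−2λt}` (assumed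
nonzero at `t = 0`) and `∇η_c(x)_i = arcsinh(x_i/c_i)`, one has
`d/dt ∇η_{γ(t)}(x(t)) = −2∇F(x(t))` in every coordinate, for all `t`. -/
theorem statement10 {n : ℕ} (lam : ℝ) (hlam : 0 ≤ lam)
    (F : (Fin n → ℝ) → ℝ) (DF : (Fin n → ℝ) → (Fin n → ℝ))
    (hDF : ∀ x, HasFDerivAt F (vecCLM (DF x)) x)
    (u v : ℝ → Fin n → ℝ)
    (hu : ∀ t i, HasDerivAt (fun s => u s i)
      (-lam * u t i - v t i * DF (fun i' => u t i' * v t i') i) t)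
    (hv : ∀ t i, HasDerivAt (fun s => v s i)
      (-lam * v t i - u t i * DF (fun i' => u t i' * v t i') i) t)
    (hinit : ∀ i, (u 0 i)^2 ≠ (v 0 i)^2) :
    ∀ t i, HasDerivAt
      (fun s => Real.arsinh
        ((u s i * v s i) / ((1/2) * |(u 0 i)^2 - (v 0 i)^2| * Real.exp (-2*lam*s))))
      (-2 * DF (fun i' => u t i' * v t i') i) t := by
  intro t i
  set D : ℝ → ℝ := fun s => DF (fun i' => u s i' * v s i') i with hDdef
  have ha : ∀ s, HasDerivAt (fun r => u r i) (-lam * u s i - v s i * D s) s := fun s => hu s i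
  have hb : ∀ s, HasDerivAt (fun r => v r i) (-lam * v s i - u s i * D s) s := fun s => hv s i
  -- the invariant (u²-v²)e^{2λt} is constant
  have hw : ∀ s, HasDerivAt (fun r => ((u r i)^2 - (v r i)^2) * Real.exp (2*lam*r)) 0 s := by
    intro s
    have h1 : HasDerivAt (fun r => (u r i)^2 - (v r i)^2)
        ((2 * u s i ^ 1) * (-lam * u s i - v s i * D s)
          - (2 * v s i ^ 1) * (-lam * v s i - u s i * D s)) s := by
      have := ((ha s).fun_pow 2).fun_sub ((hb s).fun_pow 2)
      simpa using this
    have h2 : HasDerivAt (fun r => Real.exp (2*lam*r)) (Real.exp (2*lam*s) * (2*lam)) s := by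
      have := (Real.hasDerivAt_exp (2*lam*s)).comp s ((hasDerivAt_id s).const_mul (2*lam))
      simpa [Function.comp_def, mul_comm] using this
    have h3 := h1.fun_mul h2
    exact h3.congr_deriv (by ring)
  have hconst : ∀ s, ((u s i)^2 - (v s i)^2) * Real.exp (2*lam*s)
      = (u 0 i)^2 - (v 0 i)^2 := by
    intro s
    have h := is_const_of_deriv_eq_zero
      (f := fun r => ((u r i)^2 - (v r i)^2) * Real.exp (2*lam*r))
      (fun r => (hw r).differentiableAt) (fun r => (hw r).deriv) s 0
    simpa using h
  have hxt : (u t i)^2 - (v t i)^2 = ((u 0 i)^2 - (v 0 i)^2) * Real.exp (-2*lam*t) := by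
    have h := hconst t
    have hexp : Real.exp (2*lam*t) ≠ 0 := Real.exp_ne_zero _
    rw [eq_comm, show (-2*lam*t : ℝ) = -(2*lam*t) by ring, Real.exp_neg,
      mul_inv_eq_iff_eq_mul₀ hexp] at *
    linarith [h]
  set G : ℝ := (1/2) * |(u 0 i)^2 - (v 0 i)^2| * Real.exp (-2*lam*t) with hGdef
  have hGpos : 0 < G := by
    have h0 : 0 < |(u 0 i)^2 - (v 0 i)^2| := abs_pos.mpr (sub_ne_zero.mpr (hinit i))
    positivity
  have hGne : G ≠ 0 := ne_of_gt hGpos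
  have hG2 : ((u t i)^2 - (v t i)^2)^2 = 4 * G^2 := by
    rw [hxt, hGdef]
    rw [mul_pow, mul_pow, mul_pow, sq_abs]
    ring
  have hab : 0 < (u t i)^2 + (v t i)^2 := by
    nlinarith [sq_nonneg (u t i), sq_nonneg (v t i), mul_pos hGpos hGpos,
      sq_nonneg ((u t i)^2 + (v t i)^2)]
  -- derivative of the numerator and denominator
  have hN : HasDerivAt (fun s => u s i * v s i)
      ((-lam * u t i - v t i * D t) * v t i + u t i * (-lam * v t i - u t i * D t)) t :=
    (ha t).mul (hb t)
  have hDen : HasDerivAt (fun s => (1/2) * |(u 0 i)^2 - (v 0 i)^2| * Real.exp (-2*lam*s))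
      ((1/2) * |(u 0 i)^2 - (v 0 i)^2| * (Real.exp (-2*lam*t) * (-2*lam))) t := by
    have h2 : HasDerivAt (fun s => Real.exp (-2*lam*s)) (Real.exp (-2*lam*t) * (-2*lam)) t := by
      have := (Real.hasDerivAt_exp (-2*lam*t)).comp t ((hasDerivAt_id t).const_mul (-2*lam))
      simpa [Function.comp_def, mul_comm] using this
    exact h2.const_mul _
  have hg := hN.fun_div hDen hGne
  have harsinh := hg.arsinh
  have hval : (u t i * v t i) / G = u t i * v t i / G := rfl
  -- compute the sqrt term
  have hsq : 1 + (u t i * v t i / G)^2 = (((u t i)^2 + (v t i)^2) / (2*G))^2 := by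
    field_simp
    nlinarith [hG2]
  have hsqrt : Real.sqrt (1 + (u t i * v t i / G)^2) = ((u t i)^2 + (v t i)^2) / (2*G) := by
    rw [hsq, Real.sqrt_sq (by positivity)]
  have hAne : |(u 0 i)^2 - (v 0 i)^2| ≠ 0 := abs_ne_zero.mpr (sub_ne_zero.mpr (hinit i))
  have habne : (u t i)^2 + (v t i)^2 ≠ 0 := ne_of_gt hab
  have hexpne : Real.exp (-2*lam*t) ≠ 0 := Real.exp_ne_zero _
  convert harsinh using 1
  rw [hsqrt, smul_eq_mul]
  simp only [hDdef]
  field_simp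
  simp only [hGdef]
  generalize hDD : DF (fun i' => u t i' * v t i') i = DD
  ring
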